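/- arXiv:2407.09955 — 3 statements merged into one kernel-verified Lean document; each statement's English description precedes it below -/
import Mathlib

section
/- Let σ(t) = 1/(1 + e^{-t}), let x_1, ..., x_n ∈ ℝ^m and y_1, ..., y_n ∈ [0,1]. For every β ∈ ℝ^m, the Hessian matrix H(β) = Σ_{i=1}^n Δ_i x_i x_iᵀ of L_2 (where σ_i = σ(⟨β, x_i⟩) and Δ_i = (4σ_i - 6σ_i² - 2y_i + 4y_iσ_i)σ_i(1-σ_i)) satisfies H(β) ⪯ 0.155 · XᵀX in the Loewner order, where X is the n×m matrix with rows x_i. -/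
open Matrix

/-- The logistic sigmoid function `σ(t) = 1/(1 + e^{-t})`. -/
noncomputable def sigmoid (t : ℝ) : ℝ := 1 / (1 + Real.exp (-t))

lemma sigmoid_pos (t : ℝ) : 0 < sigmoid t := by unfold sigmoid; positivity

lemma sigmoid_lt_one (t : ℝ) : sigmoid t < 1 := by
  unfold sigmoid
  rw [div_lt_one (by positivity)]
  linarith [Real.exp_pos (-t)]

lemma g0_le (s : ℝ) (hs0 : 0 ≤ s) (hs1 : s ≤ 1) :
    (4 * s - 6 * s ^ 2) * s * (1 - s) ≤ 0.155 := by
  nlinarith [mul_nonneg (mul_nonneg hs0 (sub_nonneg.2 hs1)) (sq_nonneg (s - 0.3856)),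
    mul_nonneg (sub_nonneg.2 hs1) (sq_nonneg (s - 0.3853)), sq_nonneg (s - 0.3853)]

lemma g1_le (s : ℝ) (hs0 : 0 ≤ s) (hs1 : s ≤ 1) :
    (4 * s - 6 * s ^ 2 - 2 + 4 * s) * s * (1 - s) ≤ 0.155 := by
  have := g0_le (1 - s) (by linarith) (by linarith)
  nlinarith [this]

lemma coeff_le (s y : ℝ) (hs0 : 0 ≤ s) (hs1 : s ≤ 1) (hy0 : 0 ≤ y) (hy1 : y ≤ 1) :
    (4 * s - 6 * s ^ 2 - 2 * y + 4 * y * s) * s * (1 - s) ≤ 0.155 := by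
  have h0 := g0_le s hs0 hs1
  have h1 := g1_le s hs0 hs1
  nlinarith [mul_nonneg hy0 (sub_nonneg.2 h1), mul_nonneg (sub_nonneg.2 hy1) (sub_nonneg.2 h0)]

lemma psd_smul_vecMulVec {m : ℕ} (c : ℝ) (hc : 0 ≤ c) (v : Fin m → ℝ) :
    (c • Matrix.vecMulVec v v).PosSemidef := by
  rw [Matrix.posSemidef_iff_dotProduct_mulVec]
  constructor
  · ext i j
    simp [Matrix.vecMulVec_apply, Matrix.conjTranspose_apply, mul_comm]
  · intro x
    have h : star x ⬝ᵥ ((c • Matrix.vecMulVec v v) *ᵥ x) = c * (v ⬝ᵥ x) ^ 2 := by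
      simp only [Matrix.smul_mulVec, dotProduct_smul, smul_eq_mul]
      congr 1
      simp only [Matrix.mulVec, Matrix.vecMulVec_apply, dotProduct, star_trivial]
      rw [sq]
      simp_rw [Finset.mul_sum, Finset.sum_mul]
      rw [Finset.sum_comm]
      refine Finset.sum_congr rfl fun i _ => Finset.sum_congr rfl fun j _ => by ring
    rw [h]
    positivity


/-- For labels `yᵢ ∈ [0,1]`, the Hessian `H(β) = ∑ᵢ Δᵢ xᵢ xᵢᵀ` of the sigmoid
least-squares cost `L₂` (with `σᵢ = σ(⟨β, xᵢ⟩)` and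
`Δᵢ = (4σᵢ - 6σᵢ² - 2yᵢ + 4yᵢσᵢ)σᵢ(1-σᵢ)`) satisfies `H(β) ⪯ 0.155 · XᵀX` in the Loewner
order, where `X` is the matrix whose rows are the `xᵢ`. -/
theorem sigmoid_hessian_loewner_bound (n m : ℕ) (X : Matrix (Fin n) (Fin m) ℝ)
    (y : Fin n → ℝ) (hy : ∀ i, y i ∈ Set.Icc (0 : ℝ) 1) (β : Fin m → ℝ) :
    ((0.155 : ℝ) • (Xᵀ * X) -
      ∑ i, ((4 * sigmoid (β ⬝ᵥ X i) - 6 * sigmoid (β ⬝ᵥ X i) ^ 2 - 2 * y i +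
            4 * y i * sigmoid (β ⬝ᵥ X i)) * sigmoid (β ⬝ᵥ X i) *
          (1 - sigmoid (β ⬝ᵥ X i))) • Matrix.vecMulVec (X i) (X i)).PosSemidef := by
  have hXX : Xᵀ * X = ∑ i, Matrix.vecMulVec (X i) (X i) := by
    ext j k
    simp [Matrix.mul_apply, Matrix.vecMulVec_apply, Matrix.sum_apply, Matrix.transpose_apply]
  rw [hXX, Finset.smul_sum, ← Finset.sum_sub_distrib]
  have : ∀ i ∈ Finset.univ, (((0.155 : ℝ) • Matrix.vecMulVec (X i) (X i)) -
      ((4 * sigmoid (β ⬝ᵥ X i) - 6 * sigmoid (β ⬝ᵥ X i) ^ 2 - 2 * y i +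
            4 * y i * sigmoid (β ⬝ᵥ X i)) * sigmoid (β ⬝ᵥ X i) *
          (1 - sigmoid (β ⬝ᵥ X i))) • Matrix.vecMulVec (X i) (X i)).PosSemidef := by
    intro i _
    rw [← sub_smul]
    apply psd_smul_vecMulVec
    have hs0 := (sigmoid_pos (β ⬝ᵥ X i)).le
    have hs1 := (sigmoid_lt_one (β ⬝ᵥ X i)).le
    have := coeff_le (sigmoid (β ⬝ᵥ X i)) (y i) hs0 hs1 (hy i).1 (hy i).2
    linarith
  -- sum of PSD is PSD
  refine Finset.sum_induction _ _ (fun a b ha hb => ha.add hb) Matrix.PosSemidef.zero this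
end

section
/- Let X be an n×m real matrix with entries x_{ij} and ε > 0, and let B̄ be the m×m diagonal matrix with diagonal entries B̄_kk = ε + 2 Σ_{j=1}^m Σ_{i=1}^n |x_{ij} x_{ik}|. Then 2·XᵀX ⪯ B̄ in the Loewner order and B̄ is positive definite, hence invertible; consequently B̄ is a valid simplified fixed Hessian upper bound for the linear regression cost L_0(β) = Σ_i (⟨β, x_i⟩ - y_i)², whose Hessian is 2·XᵀX at every β. -/
open Matrix Finset
open scoped InnerProductSpace

private lemma aux_key_ineq (n m : ℕ) (X : Matrix (Fin n) (Fin m) ℝ) (v : Fin m → ℝ) :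
    2 * ∑ i, (∑ j, X i j * v j)^2 ≤ ∑ k, (2 * ∑ j, ∑ i, |X i j * X i k|) * (v k)^2 := by
  have h1 : ∀ i : Fin n, (∑ j, X i j * v j)^2
      = ∑ j, ∑ k, (X i j * v j) * (X i k * v k) := by
    intro i; rw [sq, Finset.sum_mul_sum]
  have h2 : ∀ (a b c d : ℝ), (a*c)*(b*d) ≤ |a*b| * (c^2+d^2)/2 := by
    intro a b c d
    nlinarith [abs_nonneg (a*b), neg_abs_le (a*b), le_abs_self (a*b), sq_nonneg (c-d),
      sq_nonneg (c+d), abs_mul_abs_self (a*b)]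
  calc 2 * ∑ i, (∑ j, X i j * v j)^2
      ≤ 2 * ∑ i, ∑ j, ∑ k, |X i j * X i k| * ((v j)^2 + (v k)^2)/2 := by
        gcongr 2 * ?_
        rw [Finset.sum_congr rfl fun i _ => h1 i]
        refine Finset.sum_le_sum fun i _ => Finset.sum_le_sum fun j _ =>
          Finset.sum_le_sum fun k _ => ?_
        have := h2 (X i j) (X i k) (v j) (v k)
        linarith
    _ = ∑ k, (2 * ∑ j, ∑ i, |X i j * X i k|) * (v k)^2 := by
        have swap : ∑ i, ∑ j, ∑ k, |X i j * X i k| * (v j)^2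
            = ∑ i, ∑ j, ∑ k, |X i j * X i k| * (v k)^2 := by
          refine Finset.sum_congr rfl fun i _ => ?_
          rw [Finset.sum_comm]
          refine Finset.sum_congr rfl fun j _ => Finset.sum_congr rfl fun k _ => ?_
          rw [abs_mul, abs_mul, mul_comm |X i j| |X i k|]
        have expand : ∀ i j k : Fin _, |X i j * X i k| * ((v j)^2 + (v k)^2)/2
            = (|X i j * X i k| * (v j)^2)/2 + (|X i j * X i k| * (v k)^2)/2 := by
          intros; ring
        simp_rw [expand, Finset.sum_add_distrib, ← Finset.sum_div]
        rw [swap]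
        have hS : ∑ i : Fin n, ∑ j : Fin m, ∑ k : Fin m, |X i j * X i k| * v k ^ 2
            = ∑ k : Fin m, ∑ j : Fin m, ∑ i : Fin n, |X i j * X i k| * v k ^ 2 := by
          calc ∑ i : Fin n, ∑ j : Fin m, ∑ k : Fin m, |X i j * X i k| * v k ^ 2
              = ∑ i : Fin n, ∑ k : Fin m, ∑ j : Fin m, |X i j * X i k| * v k ^ 2 :=
                Finset.sum_congr rfl fun i _ => Finset.sum_comm
            _ = ∑ k : Fin m, ∑ i : Fin n, ∑ j : Fin m, |X i j * X i k| * v k ^ 2 :=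
                Finset.sum_comm
            _ = ∑ k : Fin m, ∑ j : Fin m, ∑ i : Fin n, |X i j * X i k| * v k ^ 2 :=
                Finset.sum_congr rfl fun k _ => Finset.sum_comm
        rw [hS]
        have hR : ∑ k, (2 * ∑ j, ∑ i, |X i j * X i k|) * v k ^ 2
            = 2 * ∑ k : Fin m, ∑ j : Fin m, ∑ i : Fin n, |X i j * X i k| * v k ^ 2 := by
          rw [Finset.mul_sum]
          refine Finset.sum_congr rfl fun k _ => ?_
          rw [mul_assoc, Finset.sum_mul]
          exact congrArg _ (Finset.sum_congr rfl fun j _ => Finset.sum_mul ..)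
        rw [hR]
        ring

private lemma aux_psd (n m : ℕ) (X : Matrix (Fin n) (Fin m) ℝ) (ε : ℝ) (hε : 0 < ε) :
    (Matrix.diagonal (fun k => ε + 2 * ∑ j, ∑ i, |X i j * X i k|)
      - (2 : ℝ) • (Xᵀ * X)).PosSemidef := by
  refine Matrix.PosSemidef.of_dotProduct_mulVec_nonneg ?_ ?_
  · show _ = _
    rw [Matrix.conjTranspose_sub, Matrix.conjTranspose_smul, star_trivial,
      ← Matrix.conjTranspose_eq_transpose_of_trivial X,
      Matrix.isHermitian_conjTranspose_mul_self X, Matrix.isHermitian_diagonal _]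
  · intro v
    have h1 : star v ⬝ᵥ ((Matrix.diagonal (fun k => ε + 2 * ∑ j, ∑ i, |X i j * X i k|)
        - (2 : ℝ) • (Xᵀ * X)) *ᵥ v)
        = (∑ k, (ε + 2 * ∑ j, ∑ i, |X i j * X i k|) * (v k)^2)
          - 2 * ∑ i, (∑ j, X i j * v j)^2 := by
      rw [Matrix.sub_mulVec, dotProduct_sub, Matrix.smul_mulVec, dotProduct_smul]
      congr 1
      · simp only [dotProduct, Matrix.mulVec_diagonal, star_trivial]
        exact Finset.sum_congr rfl fun k _ => by ring
      · rw [smul_eq_mul]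
        congr 1
        rw [← Matrix.mulVec_mulVec, Matrix.dotProduct_mulVec, star_trivial,
          Matrix.vecMul_transpose]
        simp [dotProduct, Matrix.mulVec, sq]
    rw [h1]
    have h2 := aux_key_ineq n m X v
    have h3 : ∑ k, (ε + 2 * ∑ j, ∑ i, |X i j * X i k|) * (v k)^2
        = ε * ∑ k, (v k)^2 + ∑ k, (2 * ∑ j, ∑ i, |X i j * X i k|) * (v k)^2 := by
      rw [Finset.mul_sum, ← Finset.sum_add_distrib]
      exact Finset.sum_congr rfl fun k _ => by ring
    have h4 : 0 ≤ ∑ k, (v k)^2 := Finset.sum_nonneg fun k _ => sq_nonneg _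
    rw [h3]
    nlinarith

private lemma aux_grad (n m : ℕ) (X : Matrix (Fin n) (Fin m) ℝ) (y : Fin n → ℝ)
    (x : Fin n → EuclideanSpace ℝ (Fin m)) (β : EuclideanSpace ℝ (Fin m)) :
    HasGradientAt (fun b : EuclideanSpace ℝ (Fin m) => ∑ i, (⟪b, x i⟫_ℝ - y i) ^ 2)
      (∑ i, (2 * (⟪β, x i⟫_ℝ - y i)) • x i) β := by
  rw [hasGradientAt_iff_hasFDerivAt]
  have hdual : (InnerProductSpace.toDual ℝ (EuclideanSpace ℝ (Fin m)))
      (∑ i, (2 * (⟪β, x i⟫_ℝ - y i)) • x i)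
      = ∑ i, (2 * (⟪β, x i⟫_ℝ - y i)) • (innerSL ℝ (x i)) := by
    ext h
    simp [InnerProductSpace.toDual_apply_apply, inner_sum, inner_smul_left]
  rw [hdual]
  have heq : (fun b : EuclideanSpace ℝ (Fin m) => ∑ i, (⟪b, x i⟫_ℝ - y i) ^ 2)
      = fun b : EuclideanSpace ℝ (Fin m) => ∑ i, ((innerSL ℝ (x i)) b - y i) ^ 2 := by
    funext b
    exact Finset.sum_congr rfl fun i _ => by rw [innerSL_apply_apply, real_inner_comm]
  rw [heq]
  have hterm : ∀ i : Fin n, HasFDerivAt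
      (fun b : EuclideanSpace ℝ (Fin m) => ((innerSL ℝ (x i)) b - y i) ^ 2)
      ((2 * (⟪β, x i⟫_ℝ - y i)) • (innerSL ℝ (x i))) β := by
    intro i
    have h1 : HasFDerivAt (fun b : EuclideanSpace ℝ (Fin m) => (innerSL ℝ (x i)) b - y i)
        (innerSL ℝ (x i)) β := ((innerSL ℝ (x i)).hasFDerivAt).sub_const (y i)
    have h2 := h1.mul h1
    simp only [← sq] at h2
    refine h2.congr_fderiv ?_
    rw [innerSL_apply_apply, real_inner_comm]
    module
  exact HasFDerivAt.fun_sum fun i _ => hterm i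

private lemma aux_affine (n m : ℕ) (X : Matrix (Fin n) (Fin m) ℝ) (y : Fin n → ℝ)
    (β : EuclideanSpace ℝ (Fin m)) :
    (∑ i, (2 * (⟪β, ((WithLp.equiv 2 (Fin m → ℝ)).symm (X i) : EuclideanSpace ℝ (Fin m))⟫_ℝ
          - y i)) • ((WithLp.equiv 2 (Fin m → ℝ)).symm (X i) : EuclideanSpace ℝ (Fin m)))
      = (LinearMap.toContinuousLinearMap (Matrix.toEuclideanLin ((2 : ℝ) • (Xᵀ * X)))) β
        + ∑ i, (-(2 * y i)) •
            ((WithLp.equiv 2 (Fin m → ℝ)).symm (X i) : EuclideanSpace ℝ (Fin m)) := by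
  apply (WithLp.equiv 2 (Fin m → ℝ)).injective
  funext k
  simp only [LinearMap.coe_toContinuousLinearMap', Matrix.toEuclideanLin_apply,
    WithLp.equiv_symm_apply, WithLp.equiv_apply, WithLp.ofLp_sum, WithLp.ofLp_smul,
    WithLp.ofLp_add, WithLp.ofLp_toLp, PiLp.toLp_apply,
    Finset.sum_apply, Pi.add_apply, Pi.smul_apply, smul_eq_mul,
    Matrix.mulVec, Matrix.smul_apply, dotProduct, Matrix.mul_apply,
    Matrix.transpose_apply, PiLp.inner_apply, RCLike.inner_apply, conj_trivial,
    PiLp.add_apply, PiLp.smul_apply]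
  simp only [mul_comm (X _ _) (β.ofLp _)]
  have hterm : ∀ i : Fin n, 2 * (∑ x, β x * X i x - y i) * X i k
      = (∑ x, 2 * X i k * X i x * β x) + -(2 * y i) * X i k := by
    intro i
    rw [show 2 * (∑ x, β x * X i x - y i) * X i k
        = 2 * ((∑ x, β x * X i x) * X i k) + -(2 * y i) * X i k by ring,
      Finset.sum_mul, Finset.mul_sum]
    exact congrArg₂ _ (Finset.sum_congr rfl fun x _ => by ring) rfl
  rw [Finset.sum_congr rfl fun i _ => hterm i, Finset.sum_add_distrib]
  congr 1
  rw [Finset.sum_comm]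
  refine Finset.sum_congr rfl fun x _ => ?_
  rw [show (2 * ∑ i, X i k * X i x) * β x = ∑ i, 2 * X i k * X i x * β x by
    rw [Finset.mul_sum, Finset.sum_mul]
    exact Finset.sum_congr rfl fun i _ => by ring]

/-- For an `n×m` real matrix `X` and `ε > 0`, the diagonal matrix `B̄` with
entries `B̄_kk = ε + 2 ∑ⱼ ∑ᵢ |x_ij x_ik|` satisfies `2·XᵀX ⪯ B̄` in the Loewner order and is
positive definite, hence invertible; consequently `B̄` is a valid simplified fixed Hessian upper
bound for the linear regression cost `L₀(β) = ∑ᵢ (⟨β, xᵢ⟩ - yᵢ)²`, whose Hessian (the Fréchet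
derivative of the gradient map) is `2·XᵀX` at every `β`. -/
theorem linear_regression_sfh_bound (n m : ℕ) (X : Matrix (Fin n) (Fin m) ℝ)
    (y : Fin n → ℝ) (ε : ℝ) (hε : 0 < ε) :
    let Bbar : Matrix (Fin m) (Fin m) ℝ :=
      Matrix.diagonal (fun k => ε + 2 * ∑ j, ∑ i, |X i j * X i k|)
    let x : Fin n → EuclideanSpace ℝ (Fin m) := fun i => (WithLp.equiv 2 (Fin m → ℝ)).symm (X i)
    (Bbar - (2 : ℝ) • (Xᵀ * X)).PosSemidef ∧ Bbar.PosDef ∧ IsUnit Bbar ∧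
    ∀ β : EuclideanSpace ℝ (Fin m),
      HasFDerivAt
        (fun β' : EuclideanSpace ℝ (Fin m) =>
          gradient (fun b : EuclideanSpace ℝ (Fin m) => ∑ i, (⟪b, x i⟫_ℝ - y i) ^ 2) β')
        (LinearMap.toContinuousLinearMap (Matrix.toEuclideanLin ((2 : ℝ) • (Xᵀ * X)))) β := by
  intro Bbar x
  have hpd : Bbar.PosDef := Matrix.PosDef.diagonal fun k => by positivity
  refine ⟨aux_psd n m X ε hε, hpd, hpd.isUnit, ?_⟩
  intro β
  have hgradeq : (fun β' : EuclideanSpace ℝ (Fin m) =>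
      gradient (fun b : EuclideanSpace ℝ (Fin m) => ∑ i, (⟪b, x i⟫_ℝ - y i) ^ 2) β')
      = fun β' : EuclideanSpace ℝ (Fin m) =>
        (LinearMap.toContinuousLinearMap (Matrix.toEuclideanLin ((2 : ℝ) • (Xᵀ * X)))) β'
          + ∑ i, (-(2 * y i)) • x i := by
    funext β'
    exact (aux_grad n m X y x β').gradient.trans (aux_affine n m X y β')
  rw [hgradeq]
  exact ((LinearMap.toContinuousLinearMap
    (Matrix.toEuclideanLin ((2 : ℝ) • (Xᵀ * X)))).hasFDerivAt).add_const _
end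

section
/- Let σ(t) = 1/(1 + e^{-t}), let X be an n×m real matrix with rows x_i and entries x_{ij}, let y_1, ..., y_n ∈ [0,1], and let ε > 0. Let B̄ be the m×m diagonal matrix with B̄_kk = ε + 0.155 Σ_{j=1}^m Σ_{i=1}^n |x_{ij} x_{ik}|. Then for every β ∈ ℝ^m the Hessian Σ_{i=1}^n Δ_i x_i x_iᵀ of L_2(β) = Σ_i (σ(⟨β, x_i⟩) - y_i)², where σ_i = σ(⟨β, x_i⟩) and Δ_i = (4σ_i - 6σ_i² - 2y_i + 4y_iσ_i)σ_i(1-σ_i), satisfies Σ_i Δ_i x_i x_iᵀ ⪯ B̄ in the Loewner order, and B̄ is positive definite. -/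
open Matrix

lemma lffr_caseA (s : ℝ) (h0 : 0 ≤ s) (h1 : s ≤ 1) : 2*s^2*(2-3*s)*(1-s) ≤ 0.155 := by
  nlinarith [sq_nonneg (12*s^2 - 15*s + 4), sq_nonneg (s*(12*s^2-15*s+4)), sq_nonneg s,
    sq_nonneg (1-s), mul_nonneg h0 (sub_nonneg.2 h1)]

lemma lffr_delta_le (s y : ℝ) (h0 : 0 ≤ s) (h1 : s ≤ 1) (hy0 : 0 ≤ y) (hy1 : y ≤ 1) :
    (4*s - 6*s^2 - 2*y + 4*y*s)*s*(1-s) ≤ 0.155 := by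
  have hA := lffr_caseA s h0 h1
  have hB := lffr_caseA (1-s) (by linarith) (by linarith)
  nlinarith [mul_le_mul_of_nonneg_left hA (by linarith : (0:ℝ) ≤ 1 - y),
    mul_le_mul_of_nonneg_left hB hy0]

/-- For labels `yᵢ ∈ [0,1]` and `ε > 0`, the diagonal matrix `B̄` with entries
`B̄_kk = ε + 0.155 ∑ⱼ ∑ᵢ |x_ij x_ik|` dominates, in the Loewner order, the Hessian
`∑ᵢ Δᵢ xᵢ xᵢᵀ` of `L₂(β) = ∑ᵢ (σ(⟨β, xᵢ⟩) - yᵢ)²` at every `β` (where `σᵢ = σ(⟨β, xᵢ⟩)`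
and `Δᵢ = (4σᵢ - 6σᵢ² - 2yᵢ + 4yᵢσᵢ)σᵢ(1-σᵢ)`), and `B̄` is positive definite. -/
theorem lffr_sfh_bound (n m : ℕ) (X : Matrix (Fin n) (Fin m) ℝ) (y : Fin n → ℝ)
    (hy : ∀ i, y i ∈ Set.Icc (0 : ℝ) 1) (ε : ℝ) (hε : 0 < ε) (β : Fin m → ℝ) :
    let σ : Fin n → ℝ := fun i => sigmoid (β ⬝ᵥ X i)
    let Δ : Fin n → ℝ := fun i =>
      (4 * σ i - 6 * σ i ^ 2 - 2 * y i + 4 * y i * σ i) * σ i * (1 - σ i)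
    let Bbar : Matrix (Fin m) (Fin m) ℝ :=
      Matrix.diagonal (fun k => ε + 0.155 * ∑ j, ∑ i, |X i j * X i k|)
    (Bbar - ∑ i, Δ i • Matrix.vecMulVec (X i) (X i)).PosSemidef ∧ Bbar.PosDef := by
  intro σ Δ Bbar
  set d : Fin m → ℝ := fun k => ε + 0.155 * ∑ j, ∑ i, |X i j * X i k| with hd_def
  have hd : ∀ k, 0 < d k := by
    intro k
    have : (0:ℝ) ≤ ∑ j, ∑ i, |X i j * X i k| := by positivity
    simp only [hd_def]
    nlinarith
  have hΔ : ∀ i, Δ i ≤ 0.155 := by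
    intro i
    have h0 := (sigmoid_pos (β ⬝ᵥ X i)).le
    have h1 := (sigmoid_lt_one (β ⬝ᵥ X i)).le
    have hy0 := (hy i).1
    have hy1 := (hy i).2
    simpa [Δ, σ] using lffr_delta_le (sigmoid (β ⬝ᵥ X i)) (y i) h0 h1 hy0 hy1
  refine ⟨⟨?_, fun v => ?_⟩, Matrix.PosDef.diagonal hd⟩
  · -- Hermitian
    have h1 : Bbar.IsHermitian := Matrix.isHermitian_diagonal _
    have h2 : (∑ i, Δ i • Matrix.vecMulVec (X i) (X i)).IsHermitian := by
      unfold Matrix.IsHermitian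
      ext k l
      simp [Matrix.conjTranspose_apply, Matrix.sum_apply, Matrix.vecMulVec_apply, mul_comm]
    exact h1.sub h2
  · -- quadratic form
    simp only [star_trivial]
    -- the Hessian quadratic form
    have hS : ∀ k, ((∑ i, Δ i • Matrix.vecMulVec (X i) (X i)) *ᵥ v) k
        = ∑ i, Δ i * (X i ⬝ᵥ v) * X i k := by
      intro k
      simp only [Matrix.mulVec, dotProduct, Matrix.sum_apply, Matrix.smul_apply,
        Matrix.vecMulVec_apply, smul_eq_mul, Finset.sum_mul]
      rw [Finset.sum_comm]
      refine Finset.sum_congr rfl fun i _ => ?_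
      rw [Finset.mul_sum, Finset.sum_mul]
      exact Finset.sum_congr rfl fun l _ => by ring
    have hSv : v ⬝ᵥ ((∑ i, Δ i • Matrix.vecMulVec (X i) (X i)) *ᵥ v)
        = ∑ i, Δ i * (X i ⬝ᵥ v)^2 := by
      calc v ⬝ᵥ ((∑ i, Δ i • Matrix.vecMulVec (X i) (X i)) *ᵥ v)
          = ∑ k, v k * ∑ i, Δ i * (X i ⬝ᵥ v) * X i k := by
            rw [dotProduct]; exact Finset.sum_congr rfl fun k _ => by rw [hS k]
        _ = ∑ i, Δ i * (X i ⬝ᵥ v)^2 := by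
            simp only [Finset.mul_sum]
            rw [Finset.sum_comm]
            refine Finset.sum_congr rfl fun i _ => ?_
            calc ∑ k, v k * (Δ i * (X i ⬝ᵥ v) * X i k)
                = (∑ k, X i k * v k) * (Δ i * (X i ⬝ᵥ v)) := by
                  rw [Finset.sum_mul]; exact Finset.sum_congr rfl fun k _ => by ring
              _ = Δ i * (X i ⬝ᵥ v)^2 := by
                  rw [show (∑ k, X i k * v k) = X i ⬝ᵥ v from rfl]; ring
    have hBv : v ⬝ᵥ (Bbar *ᵥ v) = ∑ k, d k * v k ^ 2 := by
      simp only [Bbar, Matrix.mulVec_diagonal, dotProduct]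
      exact Finset.sum_congr rfl fun k _ => by ring
    suffices hv : 0 ≤ ⇑v ⬝ᵥ ((Bbar - ∑ i, Δ i • Matrix.vecMulVec (X i) (X i)) *ᵥ ⇑v) by
      simpa only [dotProduct, mulVec, Finsupp.sum_fintype, Finset.mul_sum, mul_assoc, zero_mul,
        mul_zero, Finset.sum_const_zero, implies_true] using hv
    rw [Matrix.sub_mulVec, dotProduct_sub, hSv, hBv, sub_nonneg]
    -- key per-row inequality
    have key : ∀ i, (X i ⬝ᵥ v)^2 ≤ ∑ k, (∑ j, |X i j * X i k|) * v k ^ 2 := by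
      intro i
      have step1 : (X i ⬝ᵥ v)^2 ≤ (∑ j, |X i j * v j|)^2 := by
        rw [← sq_abs]
        have h := Finset.abs_sum_le_sum_abs (fun j => X i j * v j) Finset.univ
        exact pow_le_pow_left₀ (abs_nonneg _) h 2
      have step2 : (∑ j, |X i j * v j|)^2
          = ∑ j, ∑ k, |X i j * v j| * |X i k * v k| := by
        rw [sq, Finset.sum_mul_sum]
      have step3 : ∑ j, ∑ k, |X i j * v j| * |X i k * v k|
          ≤ ∑ j, ∑ k, |X i j * X i k| * ((v j ^ 2 + v k ^ 2) / 2) := by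
        refine Finset.sum_le_sum fun j _ => Finset.sum_le_sum fun k _ => ?_
        have h1 : |X i j * v j| * |X i k * v k| = |X i j * X i k| * (|v j| * |v k|) := by
          rw [abs_mul, abs_mul, abs_mul]; ring
        rw [h1]
        refine mul_le_mul_of_nonneg_left ?_ (abs_nonneg _)
        nlinarith [sq_nonneg (|v j| - |v k|), sq_abs (v j), sq_abs (v k)]
      have swap : ∑ j, ∑ k, |X i j * X i k| * v j ^ 2 / 2
          = ∑ j, ∑ k, |X i j * X i k| * v k ^ 2 / 2 := by
        rw [Finset.sum_comm]
        refine Finset.sum_congr rfl fun k _ => Finset.sum_congr rfl fun j _ => ?_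
        rw [mul_comm (X i j)]
      have step4 : ∑ j, ∑ k, |X i j * X i k| * ((v j ^ 2 + v k ^ 2) / 2)
          = ∑ k, (∑ j, |X i j * X i k|) * v k ^ 2 := by
        have expand : ∀ j k, |X i j * X i k| * ((v j ^ 2 + v k ^ 2) / 2)
            = |X i j * X i k| * v j ^ 2 / 2 + |X i j * X i k| * v k ^ 2 / 2 :=
          fun j k => by ring
        simp only [expand, Finset.sum_add_distrib]
        rw [swap, ← Finset.sum_add_distrib]
        simp only [← Finset.sum_add_distrib]
        rw [Finset.sum_comm]
        refine Finset.sum_congr rfl fun k _ => ?_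
        rw [Finset.sum_mul]
        exact Finset.sum_congr rfl fun j _ => by ring
      calc (X i ⬝ᵥ v)^2 ≤ (∑ j, |X i j * v j|)^2 := step1
        _ = _ := step2
        _ ≤ _ := step3
        _ = _ := step4
    calc ∑ i, Δ i * (X i ⬝ᵥ v)^2
        ≤ ∑ i, 0.155 * (X i ⬝ᵥ v)^2 := by
          exact Finset.sum_le_sum fun i _ => mul_le_mul_of_nonneg_right (hΔ i) (sq_nonneg _)
      _ ≤ ∑ i, 0.155 * ∑ k, (∑ j, |X i j * X i k|) * v k ^ 2 := by
          exact Finset.sum_le_sum fun i _ =>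
            mul_le_mul_of_nonneg_left (key i) (by norm_num)
      _ = ∑ k, ∑ i, 0.155 * ((∑ j, |X i j * X i k|) * v k ^ 2) := by
          simp only [Finset.mul_sum]
          exact Finset.sum_comm
      _ ≤ ∑ k, d k * v k ^ 2 := by
          refine Finset.sum_le_sum fun k _ => ?_
          have e1 : ∑ i, 0.155 * ((∑ j, |X i j * X i k|) * v k ^ 2)
              = 0.155 * ((∑ j, ∑ i, |X i j * X i k|) * v k ^ 2) := by
            rw [← Finset.mul_sum, ← Finset.sum_mul, Finset.sum_comm]
          rw [e1]
          have h1 : (0:ℝ) ≤ v k ^ 2 := sq_nonneg _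
          have h2 : (0:ℝ) ≤ ∑ j, ∑ i, |X i j * X i k| := by positivity
          simp only [hd_def]
          nlinarith
end
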